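/- arXiv:2304.05261 — 4 statements merged into one kernel-verified Lean document; each statement's English description precedes it below -/
import Mathlib

section
/- Let Ψ̄_n = 1 - Ψ_n denote the survival function of the chi-squared distribution with n degrees of freedom, and fix n, h > 0. Then the function g(u) = Ψ̄_{n+h}(Ψ̄_n^{-1}(u)) is concave on (0,1). -/
/-- Chi-squared density with `n > 0` degrees of freedom. -/
noncomputable def chiPDF (n y : ℝ) : ℝ :=
  if 0 < y then Real.exp (-y / 2) * y ^ (n / 2 - 1) / (2 ^ (n / 2) * Real.Gamma (n / 2)) else 0

/-- Chi-squared survival function `Ψ̄_n`. -/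
noncomputable def chiSurv (n x : ℝ) : ℝ := ∫ t in Set.Ioi x, chiPDF n t

open MeasureTheory Real Set

lemma chiPDF_nonneg {n : ℝ} (hn : 0 < n) (y : ℝ) : 0 ≤ chiPDF n y := by
  unfold chiPDF
  split_ifs with hy
  · have hg := Real.Gamma_pos_of_pos (by positivity : (0:ℝ) < n / 2)
    positivity
  · exact le_rfl

lemma chiPDF_of_nonpos {n y : ℝ} (hy : y ≤ 0) : chiPDF n y = 0 := by
  simp [chiPDF, not_lt.mpr hy]

lemma integrable_chiPDF {n : ℝ} (hn : 0 < n) : Integrable (chiPDF n) := by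
  have h1 : IntegrableOn (fun y : ℝ => y ^ (n/2-1) * Real.exp (-(1/2) * y ^ (1:ℝ))) (Ioi 0) :=
    integrableOn_rpow_mul_exp_neg_mul_rpow (by linarith) one_pos one_half_pos
  have h2 : IntegrableOn (chiPDF n) (Ioi 0) := by
    have h1' : IntegrableOn
        (fun y : ℝ => y ^ (n/2-1) * Real.exp (-(1/2) * y ^ (1:ℝ)) / (2 ^ (n / 2) * Real.Gamma (n / 2)))
        (Ioi 0) := h1.div_const _
    apply h1'.congr_fun ?_ measurableSet_Ioi
    intro y hy
    simp only [chiPDF, if_pos (mem_Ioi.mp hy), rpow_one]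
    ring_nf
  have h3 : chiPDF n = Set.indicator (Ioi 0) (chiPDF n) := by
    ext y
    rw [Set.indicator_apply]
    split_ifs with hy
    · rfl
    · exact chiPDF_of_nonpos (not_lt.mp (by simpa using hy))
  rw [h3]
  exact h2.integrable_indicator measurableSet_Ioi

lemma chiSurv_sub {n : ℝ} (hn : 0 < n) {x y : ℝ} (hxy : x ≤ y) :
    chiSurv n x = (∫ t in Set.Ioc x y, chiPDF n t) + chiSurv n y := by
  unfold chiSurv
  rw [← Ioc_union_Ioi_eq_Ioi hxy,
    setIntegral_union (Ioc_disjoint_Ioi le_rfl) measurableSet_Ioi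
      ((integrable_chiPDF hn).integrableOn) ((integrable_chiPDF hn).integrableOn)]

lemma chiSurv_anti {n : ℝ} (hn : 0 < n) {x y : ℝ} (hxy : x ≤ y) :
    chiSurv n y ≤ chiSurv n x := by
  rw [chiSurv_sub hn hxy]
  have : 0 ≤ ∫ t in Set.Ioc x y, chiPDF n t :=
    setIntegral_nonneg measurableSet_Ioc fun t _ => chiPDF_nonneg hn t
  linarith

lemma chiSurv_zero {n : ℝ} (hn : 0 < n) : chiSurv n 0 = 1 := by
  unfold chiSurv
  have hC : (0:ℝ) < 2 ^ (n / 2) * Real.Gamma (n / 2) := by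
    have hg := Real.Gamma_pos_of_pos (by positivity : (0:ℝ) < n / 2)
    positivity
  have : ∀ t ∈ Set.Ioi (0:ℝ), chiPDF n t
      = t ^ (n/2 - 1) * Real.exp (-(1/2 * t)) / (2 ^ (n / 2) * Real.Gamma (n / 2)) := by
    intro t ht
    simp only [chiPDF, if_pos (mem_Ioi.mp ht)]
    ring_nf
  rw [setIntegral_congr_fun measurableSet_Ioi this, integral_div,
    integral_rpow_mul_exp_neg_mul_Ioi (by positivity) one_half_pos]
  rw [show (1:ℝ) / (1/2) = 2 by norm_num]
  field_simp

lemma chiSurv_of_nonpos {n : ℝ} (hn : 0 < n) {x : ℝ} (hx : x ≤ 0) : chiSurv n x = 1 := by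
  rw [chiSurv_sub hn hx, chiSurv_zero hn]
  have : ∫ t in Set.Ioc x 0, chiPDF n t = 0 := by
    rw [setIntegral_congr_fun measurableSet_Ioc (fun t ht => chiPDF_of_nonpos ht.2)]
    simp
  rw [this, zero_add]

lemma chiPDF_ratio {n h : ℝ} (hn : 0 < n) (hh : 0 < h) {y : ℝ} (hy : 0 < y) :
    chiPDF (n + h) y
      = (2 ^ (n / 2) * Real.Gamma (n / 2)) / (2 ^ ((n + h) / 2) * Real.Gamma ((n + h) / 2))
        * y ^ (h / 2) * chiPDF n y := by
  have hrw : y ^ ((n + h) / 2 - 1) = y ^ (h / 2) * y ^ (n / 2 - 1) := by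
    rw [← Real.rpow_add hy]; congr 1; ring
  have hC1 : (0:ℝ) < 2 ^ (n / 2) * Real.Gamma (n / 2) := by
    have hg := Real.Gamma_pos_of_pos (by positivity : (0:ℝ) < n / 2)
    positivity
  have hC2 : (0:ℝ) < 2 ^ ((n + h) / 2) * Real.Gamma ((n + h) / 2) := by
    have hg := Real.Gamma_pos_of_pos (by positivity : (0:ℝ) < (n + h) / 2)
    positivity
  simp only [chiPDF, if_pos hy, hrw]
  field_simp

lemma chiPDF_le {n h : ℝ} (hn : 0 < n) (hh : 0 < h) {m y : ℝ} (hm : 0 < m) (hym : y ≤ m) :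
    chiPDF (n + h) y
      ≤ (2 ^ (n / 2) * Real.Gamma (n / 2)) / (2 ^ ((n + h) / 2) * Real.Gamma ((n + h) / 2))
        * m ^ (h / 2) * chiPDF n y := by
  have hC1 : (0:ℝ) < 2 ^ (n / 2) * Real.Gamma (n / 2) := by
    have hg := Real.Gamma_pos_of_pos (by positivity : (0:ℝ) < n / 2)
    positivity
  have hC2 : (0:ℝ) < 2 ^ ((n + h) / 2) * Real.Gamma ((n + h) / 2) := by
    have hg := Real.Gamma_pos_of_pos (by positivity : (0:ℝ) < (n + h) / 2)
    positivity
  rcases le_or_gt y 0 with hy | hy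
  · rw [chiPDF_of_nonpos hy, chiPDF_of_nonpos (n := n) hy, mul_zero]
  · rw [chiPDF_ratio hn hh hy]
    have h1 : y ^ (h / 2) ≤ m ^ (h / 2) := Real.rpow_le_rpow hy.le hym (by positivity)
    have h2 : 0 ≤ chiPDF n y := chiPDF_nonneg hn y
    have h3 : 0 ≤ (2 ^ (n / 2) * Real.Gamma (n / 2)) / (2 ^ ((n + h) / 2) * Real.Gamma ((n + h) / 2)) := by positivity
    exact mul_le_mul_of_nonneg_right (mul_le_mul_of_nonneg_left h1 h3) h2

lemma chiPDF_ge {n h : ℝ} (hn : 0 < n) (hh : 0 < h) {m y : ℝ} (hm : 0 < m) (hym : m ≤ y) :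
    (2 ^ (n / 2) * Real.Gamma (n / 2)) / (2 ^ ((n + h) / 2) * Real.Gamma ((n + h) / 2))
        * m ^ (h / 2) * chiPDF n y ≤ chiPDF (n + h) y := by
  have hy : 0 < y := lt_of_lt_of_le hm hym
  have hC1 : (0:ℝ) < 2 ^ (n / 2) * Real.Gamma (n / 2) := by
    have hg := Real.Gamma_pos_of_pos (by positivity : (0:ℝ) < n / 2)
    positivity
  have hC2 : (0:ℝ) < 2 ^ ((n + h) / 2) * Real.Gamma ((n + h) / 2) := by
    have hg := Real.Gamma_pos_of_pos (by positivity : (0:ℝ) < (n + h) / 2)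
    positivity
  rw [chiPDF_ratio hn hh hy]
  have h1 : m ^ (h / 2) ≤ y ^ (h / 2) := Real.rpow_le_rpow hm.le hym (by positivity)
  have h2 : 0 ≤ chiPDF n y := chiPDF_nonneg hn y
  have h3 : 0 ≤ (2 ^ (n / 2) * Real.Gamma (n / 2)) / (2 ^ ((n + h) / 2) * Real.Gamma ((n + h) / 2)) := by positivity
  exact mul_le_mul_of_nonneg_right (mul_le_mul_of_nonneg_left h1 h3) h2

/-- For `n, h > 0`, the function `g(u) = Ψ̄_{n+h}(Ψ̄_n⁻¹(u))` is concave on `(0,1)`,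
where `q` is the inverse of `Ψ̄_n` on `(0,1)`. -/
theorem concave_chiSurv_comp_inv (n h : ℝ) (hn : 0 < n) (hh : 0 < h)
    (q : ℝ → ℝ) (hq : ∀ u ∈ Set.Ioo (0 : ℝ) 1, chiSurv n (q u) = u) :
    ConcaveOn ℝ (Set.Ioo (0 : ℝ) 1) (fun u => chiSurv (n + h) (q u)) := by
  have hnh : 0 < n + h := by linarith
  -- q is positive on (0,1)
  have hqpos : ∀ u ∈ Set.Ioo (0 : ℝ) 1, 0 < q u := by
    intro u hu
    by_contra hle
    have := chiSurv_of_nonpos hn (not_lt.mp hle)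
    rw [hq u hu] at this
    exact absurd this (ne_of_lt hu.2)
  -- q is strictly antitone
  have hqanti : ∀ u ∈ Set.Ioo (0 : ℝ) 1, ∀ v ∈ Set.Ioo (0 : ℝ) 1, u < v → q v < q u := by
    intro u hu v hv huv
    by_contra hle
    have := chiSurv_anti hn (not_lt.mp hle)
    rw [hq u hu, hq v hv] at this
    linarith
  apply concaveOn_of_slope_anti_adjacent (convex_Ioo 0 1)
  intro x y z hx hz hxy hyz
  have hy : y ∈ Set.Ioo (0:ℝ) 1 := ⟨lt_trans hx.1 hxy, lt_trans hyz hz.2⟩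
  have hqyx : q y < q x := hqanti x hx y hy hxy
  have hqzy : q z < q y := hqanti y hy z hz hyz
  have hqy : 0 < q y := hqpos y hy
  set K : ℝ := (2 ^ (n / 2) * Real.Gamma (n / 2)) /
    (2 ^ ((n + h) / 2) * Real.Gamma ((n + h) / 2)) with hK
  set c : ℝ := K * (q y) ^ (h / 2) with hc
  -- differences as integrals
  have d1 : chiSurv (n + h) (q y) - chiSurv (n + h) (q x)
      = ∫ t in Set.Ioc (q y) (q x), chiPDF (n + h) t := by
    rw [chiSurv_sub hnh hqyx.le]; ring
  have d2 : chiSurv (n + h) (q z) - chiSurv (n + h) (q y)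
      = ∫ t in Set.Ioc (q z) (q y), chiPDF (n + h) t := by
    rw [chiSurv_sub hnh hqzy.le]; ring
  have d3 : y - x = ∫ t in Set.Ioc (q y) (q x), chiPDF n t := by
    have := chiSurv_sub hn hqyx.le (n := n)
    rw [hq x hx, hq y hy] at this; linarith
  have d4 : z - y = ∫ t in Set.Ioc (q z) (q y), chiPDF n t := by
    have := chiSurv_sub hn hqzy.le (n := n)
    rw [hq y hy, hq z hz] at this; linarith
  -- integral bounds
  have b1 : c * (y - x) ≤ chiSurv (n + h) (q y) - chiSurv (n + h) (q x) := by
    rw [d1, d3, ← integral_const_mul]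
    apply setIntegral_mono_on
    · exact (integrable_chiPDF hn).integrableOn.const_mul c
    · exact (integrable_chiPDF hnh).integrableOn
    · exact measurableSet_Ioc
    · intro t ht
      rw [hc, hK, mul_assoc, ← mul_assoc]
      exact chiPDF_ge hn hh hqy ht.1.le
  have b2 : chiSurv (n + h) (q z) - chiSurv (n + h) (q y) ≤ c * (z - y) := by
    rw [d2, d4, ← integral_const_mul]
    apply setIntegral_mono_on
    · exact (integrable_chiPDF hnh).integrableOn
    · exact (integrable_chiPDF hn).integrableOn.const_mul c
    · exact measurableSet_Ioc
    · intro t ht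
      rw [hc, hK, mul_assoc, ← mul_assoc]
      exact chiPDF_le hn hh hqy ht.2
  -- conclude
  have hxy' : 0 < y - x := by linarith
  have hyz' : 0 < z - y := by linarith
  rw [div_le_div_iff₀ hyz' hxy']
  nlinarith
end

section
/- (Lemma 3 of the paper) For any fixed n > 0 and λ ≥ 0, the function u ↦ Pr[χ'²_n(λ) ≥ Ψ̄_n^{-1}(u)] / u is non-increasing in u ∈ (0,1). -/
/-- Non-central chi-squared density: Poisson(lam/2) mixture of central densities. -/
noncomputable def ncChiPDF (n lam y : ℝ) : ℝ :=
  ∑' j : ℕ, Real.exp (-lam / 2) * (lam / 2) ^ j / (Nat.factorial j) * chiPDF (n + 2 * j) y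

/-- Non-central chi-squared survival function. -/
noncomputable def ncChiSurv (n lam x : ℝ) : ℝ := ∫ t in Set.Ioi x, ncChiPDF n lam t

open MeasureTheory Set Real

lemma chiPDF_nonneg_s4 (m y : ℝ) (hm : 0 < m) : 0 ≤ chiPDF m y := by
  unfold chiPDF
  split
  · have : 0 < Real.Gamma (m / 2) := Real.Gamma_pos_of_pos (by linarith)
    positivity
  · exact le_rfl

lemma chiPDF_eq_indicator (m : ℝ) : chiPDF m = Set.indicator (Set.Ioi 0)
    (fun y => Real.exp (-y / 2) * y ^ (m / 2 - 1) / (2 ^ (m / 2) * Real.Gamma (m / 2))) := by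
  ext y
  simp [chiPDF, Set.indicator_apply, Set.mem_Ioi]

lemma integrable_chiPDF_s4 {m : ℝ} (hm : 0 < m) : MeasureTheory.Integrable (chiPDF m) := by
  rw [chiPDF_eq_indicator]
  rw [integrable_indicator_iff measurableSet_Ioi]
  have h0 : IntegrableOn (fun y : ℝ => y ^ (m / 2 - 1) * Real.exp (-(2⁻¹ * y))) (Set.Ioi 0) := by
    have := integrableOn_rpow_mul_exp_neg_mul_rpow
      (show (-1 : ℝ) < m / 2 - 1 by linarith) (zero_lt_one : (0:ℝ) < 1)
      (show (0 : ℝ) < 2⁻¹ by norm_num)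
    simpa [Real.rpow_one] using this
  refine IntegrableOn.congr_fun (h0.mul_const ((2 ^ (m / 2) * Real.Gamma (m / 2))⁻¹))
    (fun y _ => ?_) measurableSet_Ioi
  rw [show -(2⁻¹ * y) = -y / 2 by ring]
  ring

lemma integral_g (m : ℝ) (hm : 0 < m) :
    ∫ y in Set.Ioi (0:ℝ),
      Real.exp (-y / 2) * y ^ (m / 2 - 1) / (2 ^ (m / 2) * Real.Gamma (m / 2)) = 1 := by
  have hG : 0 < Real.Gamma (m / 2) := Real.Gamma_pos_of_pos (by linarith)
  have hkey : ∫ t in Set.Ioi (0:ℝ), t ^ (m / 2 - 1) * Real.exp (-(2⁻¹ * t))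
      = (1 / 2⁻¹ : ℝ) ^ (m / 2) * Real.Gamma (m / 2) := by
    have := Real.integral_rpow_mul_exp_neg_mul_Ioi
      (show (0 : ℝ) < m / 2 by linarith) (show (0 : ℝ) < 2⁻¹ by norm_num)
    simpa using this
  have h2 : (1 / 2⁻¹ : ℝ) = 2 := by norm_num
  rw [h2] at hkey
  have heq : ∫ y in Set.Ioi (0:ℝ),
      Real.exp (-y / 2) * y ^ (m / 2 - 1) / (2 ^ (m / 2) * Real.Gamma (m / 2))
      = (∫ t in Set.Ioi (0:ℝ), t ^ (m / 2 - 1) * Real.exp (-(2⁻¹ * t)))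
        / (2 ^ (m / 2) * Real.Gamma (m / 2)) := by
    rw [← integral_div]
    refine setIntegral_congr_fun measurableSet_Ioi (fun y _ => ?_)
    rw [show -(2⁻¹ * y) = -y / 2 by ring]
    ring
  rw [heq, hkey]
  have h2p : (0:ℝ) < (2:ℝ) ^ (m / 2) := Real.rpow_pos_of_pos two_pos _
  field_simp

lemma chiSurv_eq_one_of_nonpos {m : ℝ} (hm : 0 < m) {x : ℝ} (hx : x ≤ 0) :
    chiSurv m x = 1 := by
  unfold chiSurv
  rw [chiPDF_eq_indicator, setIntegral_indicator measurableSet_Ioi,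
    Set.Ioi_inter_Ioi, max_eq_right hx]
  exact integral_g m hm

lemma integral_chiPDF_total {m : ℝ} (hm : 0 < m) : ∫ y, chiPDF m y = 1 := by
  rw [chiPDF_eq_indicator, integral_indicator measurableSet_Ioi]
  exact integral_g m hm

lemma chiSurv_nonneg (m x : ℝ) (hm : 0 < m) : 0 ≤ chiSurv m x :=
  setIntegral_nonneg measurableSet_Ioi fun y _ => chiPDF_nonneg_s4 m y hm

lemma chiSurv_le_one {m : ℝ} (hm : 0 < m) (x : ℝ) : chiSurv m x ≤ 1 := by
  have h1 : chiSurv m x ≤ ∫ y, chiPDF m y :=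
    setIntegral_le_integral (integrable_chiPDF_s4 hm)
      (Filter.Eventually.of_forall fun y => chiPDF_nonneg_s4 m y hm)
  rwa [integral_chiPDF_total hm] at h1

lemma chiSurv_anti_s4 {m : ℝ} (hm : 0 < m) {a b : ℝ} (hab : a ≤ b) :
    chiSurv m b ≤ chiSurv m a :=
  setIntegral_mono_set (integrable_chiPDF_s4 hm).integrableOn
    (Filter.Eventually.of_forall fun y => chiPDF_nonneg_s4 m y hm)
    (HasSubset.Subset.eventuallyLE (Set.Ioi_subset_Ioi hab))

lemma chiPDF_pos {m y : ℝ} (hm : 0 < m) (hy : 0 < y) : 0 < chiPDF m y := by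
  have hG : 0 < Real.Gamma (m / 2) := Real.Gamma_pos_of_pos (by linarith)
  rw [chiPDF, if_pos hy]
  positivity

/-- Monotone likelihood ratio for the chi-squared family. -/
lemma chiPDF_mlr {m1 m2 s t : ℝ} (hm1 : 0 < m1) (hm : m1 ≤ m2) (hs : 0 < s) (hst : s ≤ t) :
    chiPDF m2 s * chiPDF m1 t ≤ chiPDF m1 s * chiPDF m2 t := by
  have ht : 0 < t := lt_of_lt_of_le hs hst
  have hd : (0:ℝ) ≤ (m2 - m1) / 2 := by linarith
  have key : s ^ (m2 / 2 - 1) * t ^ (m1 / 2 - 1) ≤ s ^ (m1 / 2 - 1) * t ^ (m2 / 2 - 1) := by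
    have h1 : s ^ (m2 / 2 - 1) = s ^ (m1 / 2 - 1) * s ^ ((m2 - m1) / 2) := by
      rw [← Real.rpow_add hs]; ring_nf
    have h2 : t ^ (m2 / 2 - 1) = t ^ (m1 / 2 - 1) * t ^ ((m2 - m1) / 2) := by
      rw [← Real.rpow_add ht]; ring_nf
    rw [h1, h2]
    have hle : s ^ ((m2 - m1) / 2) ≤ t ^ ((m2 - m1) / 2) :=
      Real.rpow_le_rpow hs.le hst hd
    have p1 : (0:ℝ) ≤ s ^ (m1 / 2 - 1) := (Real.rpow_pos_of_pos hs _).le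
    have p2 : (0:ℝ) ≤ t ^ (m1 / 2 - 1) := (Real.rpow_pos_of_pos ht _).le
    nlinarith [mul_le_mul_of_nonneg_left hle (mul_nonneg p1 p2)]
  have hG1 : 0 < Real.Gamma (m1 / 2) := Real.Gamma_pos_of_pos (by linarith)
  have hG2 : 0 < Real.Gamma (m2 / 2) := Real.Gamma_pos_of_pos (by linarith)
  have h21 : (0:ℝ) < (2:ℝ) ^ (m1 / 2) := Real.rpow_pos_of_pos two_pos _
  have h22 : (0:ℝ) < (2:ℝ) ^ (m2 / 2) := Real.rpow_pos_of_pos two_pos _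
  simp only [chiPDF, if_pos hs, if_pos ht]
  rw [div_mul_div_comm, div_mul_div_comm, mul_comm ((2:ℝ) ^ (m2 / 2) * Real.Gamma (m2 / 2)),
    div_le_div_iff_of_pos_right (by positivity)]
  have e1 : (0:ℝ) < Real.exp (-s / 2) := Real.exp_pos _
  have e2 : (0:ℝ) < Real.exp (-t / 2) := Real.exp_pos _
  nlinarith [mul_le_mul_of_nonneg_left key (mul_pos e1 e2).le]

/-- The survival-function ratio inequality. -/
lemma chiSurv_ratio {m1 m2 x1 x2 : ℝ} (hm1 : 0 < m1) (hm : m1 ≤ m2)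
    (hx2 : 0 < x2) (hx : x2 ≤ x1) :
    chiSurv m2 x2 * chiSurv m1 x1 ≤ chiSurv m2 x1 * chiSurv m1 x2 := by
  have hm2 : 0 < m2 := lt_of_lt_of_le hm1 hm
  have hx1 : 0 < x1 := lt_of_lt_of_le hx2 hx
  set c1 := chiPDF m1 x1 with hc1
  set c2 := chiPDF m2 x1 with hc2
  have hc1p : 0 < c1 := chiPDF_pos hm1 hx1
  have hc2p : 0 < c2 := chiPDF_pos hm2 hx1
  have split : ∀ m : ℝ, 0 < m → chiSurv m x2
      = (∫ t in Set.Ioc x2 x1, chiPDF m t) + chiSurv m x1 := by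
    intro m hmp
    unfold chiSurv
    rw [← Set.Ioc_union_Ioi_eq_Ioi hx,
      setIntegral_union (Set.Ioc_disjoint_Ioi le_rfl) measurableSet_Ioi
        (integrable_chiPDF_s4 hmp).integrableOn (integrable_chiPDF_s4 hmp).integrableOn]
  set I1 := ∫ t in Set.Ioc x2 x1, chiPDF m1 t with hI1
  set I2 := ∫ t in Set.Ioc x2 x1, chiPDF m2 t with hI2
  set P1 := chiSurv m1 x1 with hP1
  set P2 := chiSurv m2 x1 with hP2
  have hI1n : 0 ≤ I1 := setIntegral_nonneg measurableSet_Ioc fun y _ => chiPDF_nonneg_s4 m1 y hm1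
  have hI2n : 0 ≤ I2 := setIntegral_nonneg measurableSet_Ioc fun y _ => chiPDF_nonneg_s4 m2 y hm2
  have hP1n : 0 ≤ P1 := chiSurv_nonneg m1 x1 hm1
  have hP2n : 0 ≤ P2 := chiSurv_nonneg m2 x1 hm2
  have ha : c1 * I2 ≤ c2 * I1 := by
    rw [← MeasureTheory.integral_const_mul, ← MeasureTheory.integral_const_mul]
    refine setIntegral_mono_on
      (((integrable_chiPDF_s4 hm2).const_mul c1).integrableOn)
      (((integrable_chiPDF_s4 hm1).const_mul c2).integrableOn)
      measurableSet_Ioc (fun s hs => ?_)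
    have := chiPDF_mlr hm1 hm (hx2.trans_le hs.1.le) hs.2
    nlinarith [this]
  have hb : c2 * P1 ≤ c1 * P2 := by
    unfold P1 P2
    unfold chiSurv
    rw [← MeasureTheory.integral_const_mul, ← MeasureTheory.integral_const_mul]
    refine setIntegral_mono_on
      (((integrable_chiPDF_s4 hm1).const_mul c2).integrableOn)
      (((integrable_chiPDF_s4 hm2).const_mul c1).integrableOn)
      measurableSet_Ioi (fun t ht => ?_)
    have := chiPDF_mlr hm1 hm hx1 (le_of_lt ht)
    nlinarith [this]
  rw [split m1 hm1, split m2 hm2, ← hI1, ← hI2, ← hP1, ← hP2]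
  have h1 : c1 * (I2 * P1) ≤ c1 * (I1 * P2) := by nlinarith
  have h2 : I2 * P1 ≤ I1 * P2 := le_of_mul_le_mul_left h1 hc1p
  nlinarith

lemma summable_w (lam : ℝ) :
    Summable (fun j : ℕ => Real.exp (-lam / 2) * (lam / 2) ^ j / (Nat.factorial j)) := by
  have := (Real.summable_pow_div_factorial (lam / 2)).mul_left (Real.exp (-lam / 2))
  refine this.congr fun j => ?_
  rw [mul_div_assoc]

lemma w_nonneg {lam : ℝ} (hlam : 0 ≤ lam) (j : ℕ) :
    0 ≤ Real.exp (-lam / 2) * (lam / 2) ^ j / (Nat.factorial j) := by positivity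

lemma summable_wS (n lam : ℝ) (hn : 0 < n) (hlam : 0 ≤ lam) (x : ℝ) :
    Summable (fun j : ℕ => Real.exp (-lam / 2) * (lam / 2) ^ j / (Nat.factorial j)
      * chiSurv (n + 2 * j) x) := by
  refine Summable.of_nonneg_of_le (fun j => ?_) (fun j => ?_) (summable_w lam)
  · exact mul_nonneg (w_nonneg hlam j)
      (chiSurv_nonneg _ x (by positivity))
  · calc Real.exp (-lam / 2) * (lam / 2) ^ j / (Nat.factorial j) * chiSurv (n + 2 * j) x
        ≤ Real.exp (-lam / 2) * (lam / 2) ^ j / (Nat.factorial j) * 1 :=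
          mul_le_mul_of_nonneg_left (chiSurv_le_one (by positivity) x) (w_nonneg hlam j)
      _ = _ := mul_one _

set_option maxHeartbeats 1000000 in
lemma ncChiSurv_eq (n lam : ℝ) (hn : 0 < n) (hlam : 0 ≤ lam) (x : ℝ) :
    ncChiSurv n lam x = ∑' j : ℕ, Real.exp (-lam / 2) * (lam / 2) ^ j / (Nat.factorial j)
      * chiSurv (n + 2 * j) x := by
  have hpos : ∀ j : ℕ, (0:ℝ) < n + 2 * j := fun j => by positivity
  have hint : ∀ j : ℕ, Integrable
      (fun t => Real.exp (-lam / 2) * (lam / 2) ^ j / (Nat.factorial j) * chiPDF (n + 2 * j) t)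
      (MeasureTheory.volume.restrict (Set.Ioi x)) :=
    fun j => ((integrable_chiPDF_s4 (hpos j)).const_mul _).restrict
  have hsum : Summable (fun j : ℕ => ∫ t in Set.Ioi x,
      ‖Real.exp (-lam / 2) * (lam / 2) ^ j / (Nat.factorial j) * chiPDF (n + 2 * j) t‖) := by
    refine Summable.of_nonneg_of_le
      (fun j => integral_nonneg fun t => norm_nonneg _) (fun j => ?_) (summable_w lam)
    have heq : ∫ t in Set.Ioi x,
        ‖Real.exp (-lam / 2) * (lam / 2) ^ j / (Nat.factorial j) * chiPDF (n + 2 * j) t‖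
        = ∫ t in Set.Ioi x,
          Real.exp (-lam / 2) * (lam / 2) ^ j / (Nat.factorial j) * chiPDF (n + 2 * j) t := by
      refine integral_congr_ae (Filter.Eventually.of_forall fun t => ?_)
      exact Real.norm_of_nonneg (mul_nonneg (w_nonneg hlam j) (chiPDF_nonneg_s4 _ t (hpos j)))
    rw [heq, MeasureTheory.integral_const_mul]
    calc Real.exp (-lam / 2) * (lam / 2) ^ j / (Nat.factorial j) * chiSurv (n + 2 * j) x
        ≤ Real.exp (-lam / 2) * (lam / 2) ^ j / (Nat.factorial j) * 1 :=
          mul_le_mul_of_nonneg_left (chiSurv_le_one (hpos j) x) (w_nonneg hlam j)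
      _ = _ := mul_one _
  unfold ncChiSurv ncChiPDF
  rw [← integral_tsum_of_summable_integral_norm hint hsum]
  exact tsum_congr fun j => MeasureTheory.integral_const_mul _ _

set_option maxHeartbeats 1600000 in
/-- Lemma 3: for fixed `n > 0` and `λ ≥ 0`, `u ↦ Pr[χ'²_n(λ) ≥ Ψ̄_n⁻¹(u)] / u` is
non-increasing on `(0,1)`, where `q` is the inverse of `Ψ̄_n` on `(0,1)`. -/
theorem ncChiSurv_div_antitone (n lam : ℝ) (hn : 0 < n) (hlam : 0 ≤ lam)
    (q : ℝ → ℝ) (hq : ∀ u ∈ Set.Ioo (0 : ℝ) 1, chiSurv n (q u) = u) :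
    AntitoneOn (fun u => ncChiSurv n lam (q u) / u) (Set.Ioo (0 : ℝ) 1) := by
  intro u1 h1 u2 h2 h12
  rcases eq_or_lt_of_le h12 with rfl | hlt
  · exact le_rfl
  have hu1 : chiSurv n (q u1) = u1 := hq u1 h1
  have hu2 : chiSurv n (q u2) = u2 := hq u2 h2
  have hx2 : 0 < q u2 := by
    by_contra h
    push_neg at h
    rw [chiSurv_eq_one_of_nonpos hn h] at hu2
    exact absurd hu2.symm (ne_of_lt h2.2)
  have hx21 : q u2 < q u1 := by
    by_contra h
    push_neg at h
    have := chiSurv_anti_s4 hn h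
    rw [hu1, hu2] at this
    exact absurd this (not_le_of_gt hlt)
  simp only
  rw [div_le_div_iff₀ h2.1 h1.1]
  have key : ncChiSurv n lam (q u2) * chiSurv n (q u1)
      ≤ ncChiSurv n lam (q u1) * chiSurv n (q u2) := by
    rw [ncChiSurv_eq n lam hn hlam (q u1), ncChiSurv_eq n lam hn hlam (q u2),
      ← tsum_mul_right, ← tsum_mul_right]
    have hs2 : Summable fun j : ℕ => Real.exp (-lam / 2) * (lam / 2) ^ j / (Nat.factorial j)
        * chiSurv (n + 2 * j) (q u2) * chiSurv n (q u1) :=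
      (summable_wS n lam hn hlam (q u2)).mul_right _
    have hs1 : Summable fun j : ℕ => Real.exp (-lam / 2) * (lam / 2) ^ j / (Nat.factorial j)
        * chiSurv (n + 2 * j) (q u1) * chiSurv n (q u2) :=
      (summable_wS n lam hn hlam (q u1)).mul_right _
    refine hs2.tsum_le_tsum (fun j => ?_) hs1
    have hr := chiSurv_ratio (m1 := n) (m2 := n + 2 * j) hn
      (le_add_of_nonneg_right (by positivity)) hx2 hx21.le
    have hw := w_nonneg hlam j
    calc Real.exp (-lam / 2) * (lam / 2) ^ j / (Nat.factorial j) * chiSurv (n + 2 * j) (q u2)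
          * chiSurv n (q u1)
        = Real.exp (-lam / 2) * (lam / 2) ^ j / (Nat.factorial j)
          * (chiSurv (n + 2 * j) (q u2) * chiSurv n (q u1)) := by ring
      _ ≤ Real.exp (-lam / 2) * (lam / 2) ^ j / (Nat.factorial j)
          * (chiSurv (n + 2 * j) (q u1) * chiSurv n (q u2)) :=
            mul_le_mul_of_nonneg_left hr hw
      _ = Real.exp (-lam / 2) * (lam / 2) ^ j / (Nat.factorial j) * chiSurv (n + 2 * j) (q u1)
          * chiSurv n (q u2) := by ring
  rw [hu1, hu2] at key
  exact key
end

section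
/- (FDR identity for step-up procedures) Let P_1, ..., P_d be p-values, I_0 ⊆ {1,...,d} the set of true nulls, and consider the step-up procedure with constants 0 < α_1 ≤ ... ≤ α_d < 1. Then FDR = Σ_{i∈I_0} E[ 1(P_i ≤ α_{R_{-i}+1}) / (R_{-i}+1) ], where R_{-i} = max{ j ∈ {1,...,d-1} : P_{(j)∖{i}} ≤ α_{j+1} } (taken as 0 if no such j exists) is the step-up rejection count computed from the d-1 p-values excluding P_i, shifted critical values α_2, ..., α_d. -/
open MeasureTheory

/-- Step-up rejection count: `R = max{r ≤ d : #{i : p i ≤ α r} ≥ r}` (0 if only `r = 0` works),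
an equivalent description of `max{i : P_(i) ≤ α_i}` for nondecreasing constants. -/
noncomputable def stepUpR {d : ℕ} (α : ℕ → ℝ) (p : Fin d → ℝ) : ℕ :=
  sSup {r | r ≤ d ∧ r ≤ (Finset.univ.filter fun i => p i ≤ α r).card}

/-- False discovery proportion of the step-up procedure with constants `α` and
true-null index set `I0`. -/
noncomputable def stepUpFDP {d : ℕ} (α : ℕ → ℝ) (I0 : Finset (Fin d)) (p : Fin d → ℝ) : ℝ :=
  if stepUpR α p = 0 then 0
  else ((I0.filter fun i => p i ≤ α (stepUpR α p)).card : ℝ) / (stepUpR α p)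

/-- Step-up rejection count computed from the `d-1` p-values excluding index `i`, with the
shifted critical constants `α 2, …, α d`. -/
noncomputable def stepUpRExcl {d : ℕ} (α : ℕ → ℝ) (p : Fin d → ℝ) (i : Fin d) : ℕ :=
  sSup {r | r ≤ d - 1 ∧ r ≤ ((Finset.univ.erase i).filter fun j => p j ≤ α (r + 1)).card}

section Aux

variable {d : ℕ} (α : ℕ → ℝ) (p : Fin d → ℝ) (i : Fin d)

lemma stepUpR_mem :
    stepUpR α p ≤ d ∧ stepUpR α p ≤ (Finset.univ.filter fun j => p j ≤ α (stepUpR α p)).card := by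
  have h : stepUpR α p ∈ {r | r ≤ d ∧ r ≤ (Finset.univ.filter fun j => p j ≤ α r).card} := by
    apply Nat.sSup_mem
    · exact ⟨0, Nat.zero_le _, Nat.zero_le _⟩
    · exact ⟨d, fun r hr => hr.1⟩
  exact h

lemma le_stepUpR {r : ℕ} (h1 : r ≤ d) (h2 : r ≤ (Finset.univ.filter fun j => p j ≤ α r).card) :
    r ≤ stepUpR α p := by
  apply le_csSup _ (Set.mem_setOf.2 ⟨h1, h2⟩)
  exact ⟨d, fun s hs => hs.1⟩

lemma stepUpRExcl_mem :
    stepUpRExcl α p i ≤ d - 1 ∧ stepUpRExcl α p i ≤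
      ((Finset.univ.erase i).filter fun j => p j ≤ α (stepUpRExcl α p i + 1)).card := by
  have h : stepUpRExcl α p i ∈
      {r | r ≤ d - 1 ∧ r ≤ ((Finset.univ.erase i).filter fun j => p j ≤ α (r + 1)).card} := by
    apply Nat.sSup_mem
    · exact ⟨0, Nat.zero_le _, Nat.zero_le _⟩
    · exact ⟨d - 1, fun r hr => hr.1⟩
  exact h

lemma le_stepUpRExcl {r : ℕ} (h1 : r ≤ d - 1)
    (h2 : r ≤ ((Finset.univ.erase i).filter fun j => p j ≤ α (r + 1)).card) :
    r ≤ stepUpRExcl α p i := by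
  apply le_csSup _ (Set.mem_setOf.2 ⟨h1, h2⟩)
  exact ⟨d - 1, fun s hs => hs.1⟩

lemma erase_filter_card {c : ℝ} (hc : p i ≤ c) :
    ((Finset.univ.erase i).filter fun j => p j ≤ c).card + 1
      = (Finset.univ.filter fun j => p j ≤ c).card := by
  have he : ((Finset.univ.erase i).filter fun j => p j ≤ c)
      = ((Finset.univ.filter fun j => p j ≤ c).erase i) := by
    ext j; simp [Finset.mem_erase, and_comm]
  have hi : i ∈ (Finset.univ.filter fun j => p j ≤ c) := by simpa using hc
  have hpos : 0 < (Finset.univ.filter fun j => p j ≤ c).card := Finset.card_pos.2 ⟨i, hi⟩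
  rw [he, Finset.card_erase_of_mem hi]
  omega

/-- Key combinatorial fact. -/
lemma stepUp_key (hαmono : ∀ r s : ℕ, 1 ≤ r → r ≤ s → s ≤ d → α r ≤ α s) :
    (p i ≤ α (stepUpRExcl α p i + 1) ↔ (1 ≤ stepUpR α p ∧ p i ≤ α (stepUpR α p))) ∧
    (p i ≤ α (stepUpRExcl α p i + 1) → stepUpRExcl α p i + 1 = stepUpR α p) := by
  have hd : 1 ≤ d := i.pos
  obtain ⟨hRd, hRN⟩ := stepUpR_mem α p
  obtain ⟨hR'd, hR'M⟩ := stepUpRExcl_mem α p i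
  -- forward: if p i ≤ α (R'+1) then R'+1 ≤ R
  have fwd : p i ≤ α (stepUpRExcl α p i + 1) → stepUpRExcl α p i + 1 ≤ stepUpR α p := by
    intro hc
    apply le_stepUpR
    · omega
    · rw [← erase_filter_card p i hc]; omega
  -- backward: if 1 ≤ R and p i ≤ α R then R ≤ R'+1
  have bwd : 1 ≤ stepUpR α p → p i ≤ α (stepUpR α p) → stepUpR α p ≤ stepUpRExcl α p i + 1 := by
    intro h1 h2
    have hle : stepUpR α p - 1 ≤ stepUpRExcl α p i := by
      apply le_stepUpRExcl
      · omega
      · have hrr : stepUpR α p - 1 + 1 = stepUpR α p := by omega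
        rw [hrr]
        have := erase_filter_card p i h2
        omega
    omega
  constructor
  · constructor
    · intro hc
      have h1 : stepUpRExcl α p i + 1 ≤ stepUpR α p := fwd hc
      refine ⟨by omega, le_trans hc ?_⟩
      exact hαmono (stepUpRExcl α p i + 1) (stepUpR α p) (by omega) h1 hRd
    · rintro ⟨h1, h2⟩
      exact le_trans h2 (hαmono (stepUpR α p) (stepUpRExcl α p i + 1) h1 (bwd h1 h2) (by omega))
  · intro hc
    have h1 : stepUpRExcl α p i + 1 ≤ stepUpR α p := fwd hc
    have h2 : p i ≤ α (stepUpR α p) :=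
      le_trans hc (hαmono (stepUpRExcl α p i + 1) (stepUpR α p) (by omega) h1 hRd)
    have := bwd (by omega) h2
    omega

/-- Pointwise FDP identity. -/
lemma stepUpFDP_eq (hαmono : ∀ r s : ℕ, 1 ≤ r → r ≤ s → s ≤ d → α r ≤ α s)
    (I0 : Finset (Fin d)) :
    stepUpFDP α I0 p = ∑ i ∈ I0,
      (if p i ≤ α (stepUpRExcl α p i + 1) then (1 : ℝ) / (stepUpRExcl α p i + 1) else 0) := by
  have hterm : ∀ i ∈ I0,
      (if p i ≤ α (stepUpRExcl α p i + 1) then (1 : ℝ) / (stepUpRExcl α p i + 1) else 0)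
      = (if 1 ≤ stepUpR α p ∧ p i ≤ α (stepUpR α p) then (1 : ℝ) / (stepUpR α p) else 0) := by
    intro i _
    obtain ⟨hiff, heq⟩ := stepUp_key α p i hαmono
    by_cases hc : p i ≤ α (stepUpRExcl α p i + 1)
    · rw [if_pos hc, if_pos (hiff.1 hc), ← heq hc]
      push_cast
      ring
    · rw [if_neg hc, if_neg (fun h => hc (hiff.2 h))]
  rw [Finset.sum_congr rfl hterm]
  unfold stepUpFDP
  by_cases hR : stepUpR α p = 0
  · simp [hR]
  · rw [if_neg hR]
    have h1 : 1 ≤ stepUpR α p := Nat.one_le_iff_ne_zero.2 hR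
    have h2 : ∀ i ∈ I0,
        (if 1 ≤ stepUpR α p ∧ p i ≤ α (stepUpR α p) then (1 : ℝ) / (stepUpR α p) else 0)
        = (if p i ≤ α (stepUpR α p) then (1 : ℝ) / (stepUpR α p) else 0) := by
      intro i _; simp [h1]
    rw [Finset.sum_congr rfl h2, Finset.sum_ite, Finset.sum_const, Finset.sum_const]
    simp [div_eq_mul_inv, mul_comm]

end Aux

section Meas

lemma sSup_eq_findGreatest (P : ℕ → Prop) [DecidablePred P] (m : ℕ) (h0 : P 0)
    (hb : ∀ r, P r → r ≤ m) : sSup {r | P r} = Nat.findGreatest P m := by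
  have hmem : sSup {r | P r} ∈ {r | P r} := Nat.sSup_mem ⟨0, h0⟩ ⟨m, fun r hr => hb r hr⟩
  apply le_antisymm
  · exact Nat.le_findGreatest (hb _ hmem) hmem
  · exact le_csSup ⟨m, fun r hr => hb r hr⟩ (Nat.findGreatest_spec (Nat.zero_le m) h0)

open Classical in
lemma measurable_stepUpRExcl {d : ℕ} (α : ℕ → ℝ) (i : Fin d) :
    Measurable fun x : Fin d → ℝ => stepUpRExcl α x i := by
  have hcard : ∀ r : ℕ, Measurable fun x : Fin d → ℝ =>
      ((Finset.univ.erase i).filter fun j => x j ≤ α (r + 1)).card := by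
    intro r
    have h : (fun x : Fin d → ℝ =>
        ((Finset.univ.erase i).filter fun j => x j ≤ α (r + 1)).card)
        = fun x => ∑ j ∈ Finset.univ.erase i, if x j ≤ α (r + 1) then 1 else 0 := by
      funext x; rw [Finset.card_filter]
    rw [h]
    apply Finset.measurable_sum
    intro j _
    exact Measurable.ite (measurableSet_le (measurable_pi_apply j) measurable_const)
      measurable_const measurable_const
  have hrw : (fun x : Fin d → ℝ => stepUpRExcl α x i)
      = fun x => Nat.findGreatest
          (fun r => r ≤ d - 1 ∧ r ≤ ((Finset.univ.erase i).filter fun j => x j ≤ α (r + 1)).card)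
          (d - 1) := by
    funext x
    exact sSup_eq_findGreatest _ _ (by simp) (fun r hr => hr.1)
  rw [hrw]
  apply measurable_findGreatest
  intro n _
  by_cases hn : n ≤ d - 1
  · have h : {x : Fin d → ℝ | n ≤ d - 1 ∧
        n ≤ ((Finset.univ.erase i).filter fun j => x j ≤ α (n + 1)).card}
        = {x | n ≤ ((Finset.univ.erase i).filter fun j => x j ≤ α (n + 1)).card} := by
      ext x; simp [hn]
    rw [h]
    exact (hcard n) measurableSet_Ici
  · have h : {x : Fin d → ℝ | n ≤ d - 1 ∧
        n ≤ ((Finset.univ.erase i).filter fun j => x j ≤ α (n + 1)).card} = ∅ := by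
      ext x; simp [hn]
    rw [h]
    exact MeasurableSet.empty

lemma measurable_term {d : ℕ} (α : ℕ → ℝ) (i : Fin d) :
    Measurable fun x : Fin d → ℝ =>
      (if x i ≤ α (stepUpRExcl α x i + 1) then (1 : ℝ) / (stepUpRExcl α x i + 1) else 0) := by
  have hd : 1 ≤ d := i.pos
  have hrw : (fun x : Fin d → ℝ =>
      (if x i ≤ α (stepUpRExcl α x i + 1) then (1 : ℝ) / (stepUpRExcl α x i + 1) else 0))
      = fun x => ∑ r ∈ Finset.range d,
          if stepUpRExcl α x i = r then
            (if x i ≤ α (r + 1) then (1 : ℝ) / (r + 1) else 0) else 0 := by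
    funext x
    rw [Finset.sum_ite_eq]
    have hmem : stepUpRExcl α x i ∈ Finset.range d := by
      have := (stepUpRExcl_mem α x i).1
      simp only [Finset.mem_range]; omega
    rw [if_pos hmem]
  rw [hrw]
  apply Finset.measurable_sum
  intro r _
  apply Measurable.ite ((measurable_stepUpRExcl α i) (measurableSet_singleton r))
  · exact Measurable.ite (measurableSet_le (measurable_pi_apply i) measurable_const)
      measurable_const measurable_const
  · exact measurable_const

end Meas

/-- FDR identity for step-up procedures:
`FDR = Σ_{i∈I0} E[ 1(P_i ≤ α_{R_{-i}+1}) / (R_{-i}+1) ]`. -/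
theorem stepUp_FDR_identity {Ω : Type*} [MeasurableSpace Ω] (P : Measure Ω)
    [IsProbabilityMeasure P] {d : ℕ} (p : Ω → Fin d → ℝ) (hp : Measurable p)
    (I0 : Finset (Fin d)) (α : ℕ → ℝ)
    (hα0 : 0 < α 1) (hαd : α d < 1)
    (hαmono : ∀ r s : ℕ, 1 ≤ r → r ≤ s → s ≤ d → α r ≤ α s) :
    ∫ ω, stepUpFDP α I0 (p ω) ∂P =
      ∑ i ∈ I0, ∫ ω,
        (if p ω i ≤ α (stepUpRExcl α (p ω) i + 1) then
          (1 : ℝ) / (stepUpRExcl α (p ω) i + 1) else 0) ∂P := by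
  have hint : ∀ i ∈ I0, Integrable (fun ω =>
      (if p ω i ≤ α (stepUpRExcl α (p ω) i + 1) then
        (1 : ℝ) / (stepUpRExcl α (p ω) i + 1) else 0)) P := by
    intro i _
    have hm : Measurable fun ω =>
        (if p ω i ≤ α (stepUpRExcl α (p ω) i + 1) then
          (1 : ℝ) / (stepUpRExcl α (p ω) i + 1) else 0) := (measurable_term α i).comp hp
    apply (integrable_const (1 : ℝ)).mono' hm.aestronglyMeasurable
    filter_upwards with ω
    by_cases hc : p ω i ≤ α (stepUpRExcl α (p ω) i + 1)
    · rw [if_pos hc, Real.norm_eq_abs, abs_of_nonneg (by positivity),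
        div_le_one (by positivity)]
      linarith [Nat.cast_nonneg (α := ℝ) (stepUpRExcl α (p ω) i)]
    · rw [if_neg hc]; simp
  calc ∫ ω, stepUpFDP α I0 (p ω) ∂P
      = ∫ ω, ∑ i ∈ I0, (if p ω i ≤ α (stepUpRExcl α (p ω) i + 1) then
          (1 : ℝ) / (stepUpRExcl α (p ω) i + 1) else 0) ∂P := by
        congr 1; funext ω; exact stepUpFDP_eq α (p ω) hαmono I0
    _ = ∑ i ∈ I0, ∫ ω, (if p ω i ≤ α (stepUpRExcl α (p ω) i + 1) then
          (1 : ℝ) / (stepUpRExcl α (p ω) i + 1) else 0) ∂P :=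
        integral_finset_sum I0 hint
end

section
/- If p-values P_1, ..., P_d are mutually independent, each true-null p-value P_i (i ∈ I_0) is stochastically larger than Uniform(0,1), then the FDR of the step-up procedure with constants α_i = iα_1 (the BH method) satisfies FDR ≤ |I_0| α_1 ≤ d α_1. -/
open MeasureTheory ProbabilityTheory

namespace BHaux

variable {d : ℕ} (α : ℕ → ℝ)

def suSet (p : Fin d → ℝ) : Set ℕ :=
  {r | r ≤ d ∧ r ≤ (Finset.univ.filter fun i => p i ≤ α r).card}

lemma stepUpR_eq (p : Fin d → ℝ) : stepUpR α p = sSup (suSet α p) := rfl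

lemma zero_mem_suSet (p : Fin d → ℝ) : 0 ∈ suSet α p := ⟨Nat.zero_le _, Nat.zero_le _⟩

lemma bddAbove_suSet (p : Fin d → ℝ) : BddAbove (suSet α p) :=
  ⟨d, fun _ hr => hr.1⟩

lemma stepUpR_mem (p : Fin d → ℝ) : stepUpR α p ∈ suSet α p :=
  Nat.sSup_mem ⟨0, zero_mem_suSet α p⟩ (bddAbove_suSet α p)

lemma le_stepUpR {p : Fin d → ℝ} {r : ℕ} (h : r ∈ suSet α p) : r ≤ stepUpR α p :=
  le_csSup (bddAbove_suSet α p) h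

variable {α}

lemma count_mono (hα0 : ∀ r, 0 ≤ α r) (p : Fin d → ℝ) (i : Fin d) (r : ℕ) :
    (Finset.univ.filter fun j => p j ≤ α r).card
      ≤ (Finset.univ.filter fun j => Function.update p i (-1) j ≤ α r).card := by
  apply Finset.card_le_card
  apply Finset.monotone_filter_right
  intro j _ hj
  by_cases hji : j = i
  · subst hji; rw [Function.update_self]; linarith [hα0 r]
  · rwa [Function.update_of_ne hji]

lemma count_rev {p : Fin d → ℝ} {i : Fin d} {r : ℕ} (hpi : p i ≤ α r) :
    (Finset.univ.filter fun j => Function.update p i (-1) j ≤ α r).card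
      ≤ (Finset.univ.filter fun j => p j ≤ α r).card := by
  apply Finset.card_le_card
  apply Finset.monotone_filter_right
  intro j _ hj
  by_cases hji : j = i
  · subst hji; exact hpi
  · rwa [Function.update_of_ne hji] at hj

lemma stepUpR_le_update (hα0 : ∀ r, 0 ≤ α r) (p : Fin d → ℝ) (i : Fin d) :
    stepUpR α p ≤ stepUpR α (Function.update p i (-1)) :=
  le_stepUpR α ⟨(stepUpR_mem α p).1, le_trans (stepUpR_mem α p).2 (count_mono hα0 p i _)⟩

lemma one_le_stepUpR_update (hα0 : ∀ r, 0 ≤ α r) (p : Fin d → ℝ) (i : Fin d) :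
    1 ≤ stepUpR α (Function.update p i (-1)) := by
  apply le_stepUpR α
  refine ⟨i.pos, ?_⟩
  have : i ∈ Finset.univ.filter fun j => Function.update p i (-1) j ≤ α 1 := by
    simp only [Finset.mem_filter, Finset.mem_univ, true_and, Function.update_self]
    linarith [hα0 1]
  exact Finset.card_pos.mpr ⟨i, this⟩

lemma stepUpR_update_le_d (p : Fin d → ℝ) (i : Fin d) :
    stepUpR α (Function.update p i (-1)) ≤ d :=
  (stepUpR_mem α _).1

lemma stepUpR_update_eq (hα0 : ∀ r, 0 ≤ α r) {p : Fin d → ℝ} {i : Fin d}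
    (h : p i ≤ α (stepUpR α (Function.update p i (-1)))) :
    stepUpR α p = stepUpR α (Function.update p i (-1)) := by
  refine le_antisymm (stepUpR_le_update hα0 p i) (le_stepUpR α ?_)
  exact ⟨(stepUpR_mem α _).1, le_trans (stepUpR_mem α _).2 (count_rev h)⟩

lemma FDP_eq (hα0 : ∀ r, 0 ≤ α r) (hmono : Monotone α) (I0 : Finset (Fin d)) (p : Fin d → ℝ) :
    stepUpFDP α I0 p =
      ∑ i ∈ I0, (if p i ≤ α (stepUpR α (Function.update p i (-1)))
        then ((stepUpR α (Function.update p i (-1)) : ℝ))⁻¹ else 0) := by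
  classical
  by_cases hR : stepUpR α p = 0
  · rw [stepUpFDP, if_pos hR]
    symm
    apply Finset.sum_eq_zero
    intro i _
    rw [if_neg]
    intro hcon
    have := stepUpR_update_eq hα0 hcon
    have h1 := one_le_stepUpR_update hα0 p i
    omega
  · rw [stepUpFDP, if_neg hR, Finset.card_filter]
    push_cast
    rw [Finset.sum_div]
    apply Finset.sum_congr rfl
    intro i _
    by_cases hpi : p i ≤ α (stepUpR α p)
    · have hle : p i ≤ α (stepUpR α (Function.update p i (-1))) :=
        le_trans hpi (hmono (stepUpR_le_update hα0 p i))
      rw [if_pos hpi, if_pos hle, stepUpR_update_eq hα0 hle, one_div]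
    · have hle : ¬ p i ≤ α (stepUpR α (Function.update p i (-1))) := by
        intro hcon
        exact hpi ((stepUpR_update_eq hα0 hcon) ▸ hcon)
      rw [if_neg hpi, if_neg hle, zero_div]

variable (α)

lemma measurable_count (r : ℕ) :
    Measurable fun p : Fin d → ℝ => (Finset.univ.filter fun j => p j ≤ α r).card := by
  classical
  simp only [Finset.card_filter]
  exact Finset.measurable_sum _ fun j _ =>
    Measurable.ite (measurableSet_le (measurable_pi_apply j) measurable_const)
      measurable_const measurable_const

lemma measurable_mem_suSet (s : ℕ) :
    MeasurableSet {p : Fin d → ℝ | s ∈ suSet α p} := by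
  by_cases hsd : s ≤ d
  · have : {p : Fin d → ℝ | s ∈ suSet α p}
        = (fun p : Fin d → ℝ => (Finset.univ.filter fun j => p j ≤ α s).card) ⁻¹'
          (Set.Ici s) := by
      ext q; simp [suSet, hsd]
    rw [this]
    exact measurable_count α s measurableSet_Ici
  · have : {p : Fin d → ℝ | s ∈ suSet α p} = ∅ := by
      ext q; simp [suSet, hsd]
    rw [this]; exact MeasurableSet.empty

lemma measurable_stepUpR : Measurable fun p : Fin d → ℝ => stepUpR α p := by
  apply measurable_to_countable'
  intro r
  have hset : (fun p : Fin d → ℝ => stepUpR α p) ⁻¹' {r}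
      = {p : Fin d → ℝ | r ∈ suSet α p} ∩
        ⋂ s ∈ Finset.Icc (r+1) d, {p : Fin d → ℝ | s ∈ suSet α p}ᶜ := by
    ext q
    simp only [Set.mem_preimage, Set.mem_singleton_iff, Set.mem_inter_iff, Set.mem_iInter,
      Set.mem_compl_iff, Set.mem_setOf_eq, Finset.mem_Icc]
    constructor
    · rintro rfl
      refine ⟨stepUpR_mem α q, fun s hs hmem => ?_⟩
      have := le_stepUpR α hmem
      omega
    · rintro ⟨h1, h2⟩
      have hle := le_stepUpR α h1
      have hm := stepUpR_mem α q
      by_contra hne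
      exact h2 _ ⟨by omega, hm.1⟩ hm
  rw [hset]
  exact (measurable_mem_suSet α r).inter
    (Finset.measurableSet_biInter _ fun s _ => (measurable_mem_suSet α s).compl)

end BHaux

open BHaux in
/-- BH under independence: if the p-values are mutually independent and each true-null p-value
is stochastically larger than Uniform(0,1), then the FDR of the BH step-up procedure with
constants `α_i = i·α₁` is at most `|I0|·α₁ ≤ d·α₁`. -/
theorem BH_FDR_control_indep {Ω : Type*} [MeasurableSpace Ω] (P : Measure Ω)
    [IsProbabilityMeasure P] {d : ℕ} (p : Ω → Fin d → ℝ) (hp : Measurable p)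
    (hindep : iIndepFun (fun i ω => p ω i) P)
    (I0 : Finset (Fin d))
    (hnull : ∀ i ∈ I0, ∀ u : ℝ, 0 ≤ u → u ≤ 1 → P {ω | p ω i ≤ u} ≤ ENNReal.ofReal u)
    (α₁ : ℝ) (hα₁ : 0 < α₁) (hdα₁ : (d : ℝ) * α₁ < 1) :
    ∫ ω, stepUpFDP (fun r => (r : ℝ) * α₁) I0 (p ω) ∂P ≤ (I0.card : ℝ) * α₁ ∧
      (I0.card : ℝ) * α₁ ≤ (d : ℝ) * α₁ := by
  classical
  have hd0 : (0:ℝ) ≤ α₁ := hα₁.le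
  set α : ℕ → ℝ := fun r => (r:ℝ) * α₁ with hαdef
  have hα0 : ∀ r, 0 ≤ α r := fun r => mul_nonneg (Nat.cast_nonneg r) hd0
  have hmono : Monotone α := fun a b h => mul_le_mul_of_nonneg_right (Nat.cast_le.mpr h) hd0
  constructor
  swap
  · have hcard : I0.card ≤ d := by
      simpa using Finset.card_le_univ I0
    exact mul_le_mul_of_nonneg_right (by exact_mod_cast hcard) hd0
  -- notation
  set F : Fin d → Ω → ℕ := fun i ω => stepUpR α (Function.update (p ω) i (-1)) with hFdef
  set A : Fin d → ℕ → Set Ω := fun i r => F i ⁻¹' {r} with hAdef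
  set B : Fin d → ℕ → Set Ω := fun i r => (fun ω => p ω i) ⁻¹' Set.Iic (α r) with hBdef
  have hFmeas : ∀ i, Measurable (F i) := by
    intro i
    apply (measurable_stepUpR α).comp
    apply measurable_pi_iff.mpr
    intro j
    by_cases hji : j = i
    · subst hji
      simp only [Function.update_self]
      exact measurable_const
    · simp only [Function.update_of_ne hji]
      exact hp.eval
  have hAmeas : ∀ i r, MeasurableSet (A i r) := fun i r =>
    hFmeas i (measurableSet_singleton r)
  have hBmeas : ∀ i r, MeasurableSet (B i r) := fun i r =>
    measurableSet_le hp.eval measurable_const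
  -- independence
  have hIF : ∀ i : Fin d, IndepFun (F i) (fun ω => p ω i) P := by
    intro i
    set S : Finset (Fin d) := Finset.univ.erase i with hSdef
    have hST : Disjoint S ({i} : Finset (Fin d)) := by
      simp [hSdef]
    have h1 := hindep.indepFun_finset S {i} hST (fun j => hp.eval)
    set φ : (S → ℝ) → ℕ :=
      fun v => stepUpR α (fun j => if h : j ∈ S then v ⟨j, h⟩ else (-1)) with hφdef
    have hφ : Measurable φ := by
      apply (measurable_stepUpR α).comp
      apply measurable_pi_iff.mpr
      intro j
      by_cases h : j ∈ S
      · simp only [h, dif_pos]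
        exact measurable_pi_apply _
      · simp only [h, dif_neg, not_false_iff]
        exact measurable_const
    set ψ : (({i} : Finset (Fin d)) → ℝ) → ℝ :=
      fun v => v ⟨i, Finset.mem_singleton_self i⟩ with hψdef
    have hψ : Measurable ψ := measurable_pi_apply _
    have h2 := h1.comp hφ hψ
    have he1 : (φ ∘ fun a (j : S) => p a j) = F i := by
      funext ω
      simp only [Function.comp_apply, hφdef, hFdef]
      congr 1
      funext j
      by_cases hji : j = i
      · subst hji
        rw [dif_neg (by simp [hSdef]), Function.update_self]
      · rw [dif_pos (by simp [hSdef, hji]), Function.update_of_ne hji]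
    have he2 : (ψ ∘ fun a (j : ({i} : Finset (Fin d))) => p a j) = fun ω => p ω i := rfl
    rwa [he1, he2] at h2
  -- pointwise identity
  have hrange : ∀ i ω, F i ω ∈ Finset.Icc 1 d := by
    intro i ω
    simp only [Finset.mem_Icc, hFdef]
    exact ⟨one_le_stepUpR_update hα0 _ i, stepUpR_update_le_d _ i⟩
  have hpt : ∀ ω, stepUpFDP α I0 (p ω) =
      ∑ i ∈ I0, ∑ r ∈ Finset.Icc 1 d,
        Set.indicator (A i r ∩ B i r) (fun _ => ((r:ℝ))⁻¹) ω := by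
    intro ω
    rw [FDP_eq hα0 hmono I0 (p ω)]
    apply Finset.sum_congr rfl
    intro i _
    have : ∀ r, Set.indicator (A i r ∩ B i r) (fun _ => ((r:ℝ))⁻¹) ω
        = if F i ω = r then (if p ω i ≤ α r then ((r:ℝ))⁻¹ else 0) else 0 := by
      intro r
      rw [Set.indicator_apply]
      simp only [Set.mem_inter_iff, hAdef, hBdef, Set.mem_preimage, Set.mem_singleton_iff,
        Set.mem_Iic]
      rw [← ite_and]
    simp only [this]
    rw [Finset.sum_ite_eq (Finset.Icc 1 d) (F i ω)
      (fun r => if p ω i ≤ α r then ((r:ℝ))⁻¹ else 0), if_pos (hrange i ω)]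
  have hFDPfun : (fun ω => stepUpFDP α I0 (p ω)) = fun ω =>
      ∑ i ∈ I0, ∑ r ∈ Finset.Icc 1 d,
        Set.indicator (A i r ∩ B i r) (fun _ => ((r:ℝ))⁻¹) ω := funext hpt
  rw [hFDPfun]
  have hint : ∀ (i : Fin d) (r : ℕ),
      Integrable (fun ω => Set.indicator (A i r ∩ B i r) (fun _ => ((r:ℝ))⁻¹) ω) P :=
    fun i r => (integrable_const _).indicator ((hAmeas i r).inter (hBmeas i r))
  rw [integral_finset_sum _ (fun i _ => integrable_finset_sum _ (fun r _ => hint i r))]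
  have hbound : ∀ i ∈ I0,
      (∫ ω, ∑ r ∈ Finset.Icc 1 d,
        Set.indicator (A i r ∩ B i r) (fun _ => ((r:ℝ))⁻¹) ω ∂P) ≤ α₁ := by
    intro i hi
    rw [integral_finset_sum _ (fun r _ => hint i r)]
    have hterm : ∀ r ∈ Finset.Icc 1 d,
        (∫ ω, Set.indicator (A i r ∩ B i r) (fun _ => ((r:ℝ))⁻¹) ω ∂P)
          ≤ α₁ * (P (A i r)).toReal := by
      intro r hr
      rw [Finset.mem_Icc] at hr
      rw [integral_indicator_const _ ((hAmeas i r).inter (hBmeas i r))]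
      have hmul : P (A i r ∩ B i r) = P (A i r) * P (B i r) :=
        (hIF i).measure_inter_preimage_eq_mul _ _ (measurableSet_singleton r)
          measurableSet_Iic
      have hBle : P (B i r) ≤ ENNReal.ofReal (α r) := by
        have h1 : (0:ℝ) ≤ α r := hα0 r
        have h2 : α r ≤ 1 := by
          have : (r:ℝ) * α₁ ≤ (d:ℝ) * α₁ :=
            mul_le_mul_of_nonneg_right (by exact_mod_cast hr.2) hd0
          calc α r = (r:ℝ) * α₁ := rfl
            _ ≤ (d:ℝ) * α₁ := this
            _ ≤ 1 := hdα₁.le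
        have := hnull i hi (α r) h1 h2
        exact this
      have hBtoReal : (P (B i r)).toReal ≤ α r :=
        ENNReal.toReal_le_of_le_ofReal (hα0 r) hBle
      have hr0 : (0:ℝ) < (r:ℝ) := by exact_mod_cast hr.1
      calc (P (A i r ∩ B i r)).toReal • ((r:ℝ))⁻¹
          = (P (A i r)).toReal * (P (B i r)).toReal * ((r:ℝ))⁻¹ := by
            rw [hmul, ENNReal.toReal_mul, smul_eq_mul]
        _ ≤ (P (A i r)).toReal * (α r) * ((r:ℝ))⁻¹ := by
            apply mul_le_mul_of_nonneg_right _ (by positivity)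
            exact mul_le_mul_of_nonneg_left hBtoReal ENNReal.toReal_nonneg
        _ = α₁ * (P (A i r)).toReal := by
            field_simp [hαdef]
            ring
    calc (∑ r ∈ Finset.Icc 1 d,
          ∫ ω, Set.indicator (A i r ∩ B i r) (fun _ => ((r:ℝ))⁻¹) ω ∂P)
        ≤ ∑ r ∈ Finset.Icc 1 d, α₁ * (P (A i r)).toReal := Finset.sum_le_sum hterm
      _ = α₁ * ∑ r ∈ Finset.Icc 1 d, (P (A i r)).toReal := by rw [Finset.mul_sum]
      _ ≤ α₁ * 1 := by
          apply mul_le_mul_of_nonneg_left _ hd0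
          have hdisj : (Finset.Icc 1 d : Set ℕ).PairwiseDisjoint (A i) := by
            intro r _ s _ hrs
            apply Set.disjoint_left.mpr
            intro ω hωr hωs
            exact hrs (by
              simp only [hAdef, Set.mem_preimage, Set.mem_singleton_iff] at hωr hωs
              rw [← hωr, ← hωs])
          rw [← ENNReal.toReal_sum (fun r _ => measure_ne_top P _)]
          rw [← measure_biUnion_finset hdisj (fun r _ => hAmeas i r)]
          have hle1 := prob_le_one (μ := P) (s := ⋃ r ∈ Finset.Icc 1 d, A i r)
          have h2 : (P (⋃ r ∈ Finset.Icc 1 d, A i r)).toReal ≤ (1 : ENNReal).toReal :=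
            ENNReal.toReal_mono ENNReal.one_ne_top hle1
          simpa using h2
      _ = α₁ := mul_one α₁
  calc (∑ i ∈ I0, ∫ ω, ∑ r ∈ Finset.Icc 1 d,
        Set.indicator (A i r ∩ B i r) (fun _ => ((r:ℝ))⁻¹) ω ∂P)
      ≤ ∑ x ∈ I0, α₁ := Finset.sum_le_sum hbound
    _ = (I0.card : ℝ) * α₁ := by rw [Finset.sum_const, nsmul_eq_mul]
end
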